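/- Let G be a group acting on a crossed module (M,L,∂), and assume the crossed module is faithful: if ˣm = ʸm for all m ∈ M then x = y (equivalently, the homomorphism L → Aut(M) given by the action is injective). Let (P, α) be a weak (M → L)-bitorsor, i.e., P is a nonempty set with a left G-action, a right M-action and a left M-action satisfying (m·p)·n = m·(p·n), ᵍ(p·n) = (ᵍp)·(ᵍn), ᵍ(m·p) = (ᵍm)·(ᵍp) for all m, n ∈ M, g ∈ G, p ∈ P; for all p, q ∈ P there is a unique n ∈ M with q = p·n; and α : P → L is a map such that m·p = p·(^(ξ(p))m) for all m ∈ M, p ∈ P, where ξ(p) := α(p)⁻¹. Then α satisfies α(p·n) = α(p)·∂(n) for all p ∈ P, n ∈ M, and α(ᵍp) = ᵍ(α(p)) for all g ∈ G, p ∈ P; hence (P, α) is an (M → L)-bitorsor. -/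

import Mathlib

/-- Proposition 33: if the crossed module `(M, L, pd)` is faithful (the action
homomorphism `L → Aut M` is injective), then every weak `(M → L)`-bitorsor
`(P, α)` is an `(M → L)`-bitorsor: `α` automatically satisfies
`α (p·n) = α p · pd n` and `α (ᵍp) = ᵍ(α p)`. -/
theorem statement19
    {G M L : Type} [Group G] [Group M] [Group L]
    (pd : M →* L) (ρ : L →* MulAut M)
    -- crossed module axioms
    (hpeif1 : ∀ (x : L) (m : M), pd (ρ x m) = x * pd m * x⁻¹)
    (hpeif2 : ∀ (n m : M), ρ (pd n) m = n * m * n⁻¹)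
    -- faithfulness
    (hfaith : ∀ x y : L, (∀ m : M, ρ x m = ρ y m) → x = y)
    -- G-action on the crossed module
    (φM : G →* MulAut M) (φL : G →* MulAut L)
    (hact1 : ∀ (g : G) (m : M), pd (φM g m) = φL g (pd m))
    (hact2 : ∀ (g : G) (x : L) (m : M), φM g (ρ x m) = ρ (φL g x) (φM g m))
    -- the weak bitorsor (P, α)
    {P : Type} (hP : Nonempty P)
    (aG : G → P → P) (aM : P → M → P) (lM : M → P → P) (α : P → L)
    (haG1 : ∀ p : P, aG 1 p = p)
    (haGmul : ∀ (g h : G) (p : P), aG (g * h) p = aG g (aG h p))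
    (haM1 : ∀ p : P, aM p 1 = p)
    (haMmul : ∀ (p : P) (m n : M), aM p (m * n) = aM (aM p m) n)
    (hlM1 : ∀ p : P, lM 1 p = p)
    (hlMmul : ∀ (m n : M) (p : P), lM (m * n) p = lM m (lM n p))
    (hassoc : ∀ (m n : M) (p : P), aM (lM m p) n = lM m (aM p n))
    (hGr : ∀ (g : G) (p : P) (n : M), aG g (aM p n) = aM (aG g p) (φM g n))
    (hGl : ∀ (g : G) (m : M) (p : P), aG g (lM m p) = lM (φM g m) (aG g p))
    (htrans : ∀ p q : P, ∃! n : M, q = aM p n)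
    -- the map α : P → L with m·p = p·(^(ξ p) m), ξ p = (α p)⁻¹
    (hα : ∀ (m : M) (p : P), lM m p = aM p (ρ (α p)⁻¹ m)) :
    (∀ (p : P) (n : M), α (aM p n) = α p * pd n) ∧
    (∀ (g : G) (p : P), α (aG g p) = φL g (α p)) := by
  -- freeness: the right M-action is free
  have hfree : ∀ (p : P) (a b : M), aM p a = aM p b → a = b := by
    intro p a b h
    obtain ⟨n, _, hu⟩ := htrans p (aM p b)
    exact (hu a h.symm).trans (hu b rfl).symm
  constructor
  · intro p n
    have key : ∀ m : M, ρ (α (aM p n))⁻¹ m = ρ ((α p * pd n))⁻¹ m := by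
      intro m
      have h1 : lM m (aM p n) = aM p (n * ρ (α (aM p n))⁻¹ m) := by
        rw [hα, haMmul]
      have h2 : lM m (aM p n) = aM p (ρ (α p)⁻¹ m * n) := by
        rw [← hassoc, hα, haMmul]
      have h3 : n * ρ (α (aM p n))⁻¹ m = ρ (α p)⁻¹ m * n :=
        hfree p _ _ (h1.symm.trans h2)
      have h4 : ρ (α (aM p n))⁻¹ m = n⁻¹ * ρ (α p)⁻¹ m * n := by
        rw [mul_assoc, ← h3]; group
      rw [h4]
      have := hpeif2 n⁻¹ (ρ (α p)⁻¹ m)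
      rw [map_inv] at this
      rw [inv_inv] at this
      calc n⁻¹ * ρ (α p)⁻¹ m * n = ρ (pd n)⁻¹ (ρ (α p)⁻¹ m) := by
            rw [← map_inv pd n, hpeif2, inv_inv]
        _ = ρ ((α p * pd n))⁻¹ m := by
            rw [mul_inv_rev, map_mul]; rfl
    have := hfaith _ _ key
    have := inv_injective this
    exact this
  · intro g p
    have key : ∀ m : M, ρ (α (aG g p))⁻¹ m = ρ (φL g (α p))⁻¹ m := by
      intro m
      obtain ⟨m', rfl⟩ : ∃ m', m = φM g m' := ⟨(φM g).symm m, ((φM g).apply_symm_apply m).symm⟩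
      have h1 : aG g (lM m' p) = aM (aG g p) (ρ (α (aG g p))⁻¹ (φM g m')) := by
        rw [hGl, hα]
      have h2 : aG g (lM m' p) = aM (aG g p) (ρ (φL g (α p))⁻¹ (φM g m')) := by
        rw [hα, hGr]
        congr 1
        rw [hact2]
        congr 1
        rw [map_inv]
      exact hfree _ _ _ (h1.symm.trans h2)
    exact inv_injective (hfaith _ _ key)
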